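/- In a locally compact group G, the union of finitely many right translation-compact sets is right translation-compact. -/

import Mathlib

open Pointwise

/-- A subset `T` of a topological group is right translation-compact if every
non-relatively-compact `L ⊆ G` contains a finite subset `F` with `⋂_{b ∈ F} b⁻¹T` relatively
compact. -/
def RightTranslationCompact {G : Type*} [Group G] [TopologicalSpace G] (T : Set G) : Prop :=
  ∀ L : Set G, ¬ IsCompact (closure L) →
    ∃ F : Set G, F ⊆ L ∧ F.Finite ∧ IsCompact (closure (⋂ b ∈ F, (b * ·) ⁻¹' T))

private lemma relcpt_mono {G : Type*} [TopologicalSpace G] {A B : Set G}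
    (h : A ⊆ B) (hB : IsCompact (closure B)) : IsCompact (closure A) :=
  hB.of_isClosed_subset isClosed_closure (closure_mono h)

private lemma nrc_union {G : Type*} [TopologicalSpace G] {κ : Type*} [Finite κ]
    {A : κ → Set G} (h : ¬ IsCompact (closure (⋃ k, A k))) :
    ∃ k, ¬ IsCompact (closure (A k)) := by
  by_contra hc
  push_neg at hc
  exact h ((isCompact_iUnion hc).of_isClosed_subset isClosed_closure
      (closure_minimal (Set.iUnion_mono fun k => subset_closure)
        (isClosed_iUnion_of_finite fun k => isClosed_closure)))

private lemma ultra_color {ι : Type*} [Finite ι] (𝒰 : Ultrafilter ℕ) (φ : ℕ → ι) :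
    ∃ c, {n | φ n = c} ∈ 𝒰 := by
  by_contra hc
  push_neg at hc
  have h1 : ∀ c, {n | φ n = c}ᶜ ∈ 𝒰 := fun c =>
    (Ultrafilter.compl_mem_iff_notMem).2 (hc c)
  have h2 : (⋂ c, {n | φ n = c}ᶜ) ∈ 𝒰 := (Filter.iInter_mem).2 h1
  have h3 : (⋂ c, {n | φ n = c}ᶜ) = ∅ := by
    ext n; simp
  rw [h3] at h2
  exact Filter.empty_notMem _ h2

private lemma exists_escaping_seq {G : Type*} [Group G] [TopologicalSpace G]
    [IsTopologicalGroup G] [LocallyCompactSpace G] [T2Space G] {L : Set G}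
    (hL : ¬ IsCompact (closure L)) :
    ∃ x : ℕ → G, (∀ n, x n ∈ L) ∧ Function.Injective x ∧
      ∀ M ⊆ Set.range x, M.Infinite → ¬ IsCompact (closure M) := by
  classical
  obtain ⟨K, hKc, hKn⟩ := exists_compact_mem_nhds (1 : G)
  set Q : Set G := K⁻¹ * K with hQ
  have hQc : IsCompact Q := hKc.inv.mul hKc
  have h1K : (1 : G) ∈ K := mem_of_mem_nhds hKn
  have h1Q : (1 : G) ∈ Q := by
    have := Set.mul_mem_mul (Set.inv_mem_inv.2 h1K) h1K
    simpa only [inv_one, one_mul] using this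
  have hesc : ∀ C : Set G, IsCompact C → ∃ z, z ∈ L ∧ z ∉ C := by
    intro C hC
    by_contra hcon
    push_neg at hcon
    exact hL (hC.of_isClosed_subset isClosed_closure
      (closure_minimal hcon hC.isClosed))
  have key : ∀ s : Finset G, ∃ z, z ∈ L ∧ z ∉ ⋃ y ∈ s, (y * ·) '' Q := by
    intro s
    refine hesc _ ?_
    have : IsCompact (⋃ y ∈ (↑s : Set G), (y * ·) '' Q) :=
      s.finite_toSet.isCompact_biUnion fun y _ => hQc.image (continuous_mul_left y)
    simpa using this
  choose step hstepL hstepQ using key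
  let Fs : ℕ → Finset G := fun n => Nat.rec ∅ (fun _ s => insert (step s) s) n
  let x : ℕ → G := fun n => step (Fs n)
  have hFs_succ : ∀ n, Fs (n + 1) = insert (x n) (Fs n) := fun n => rfl
  have hFs_mono : ∀ {m n : ℕ}, m ≤ n → Fs m ⊆ Fs n := by
    intro m n hmn
    induction n, hmn using Nat.le_induction with
    | base => exact subset_rfl
    | succ n hmn ih =>
        refine ih.trans ?_
        rw [hFs_succ]
        exact Finset.subset_insert _ _
  have hmem : ∀ {i j : ℕ}, i < j → x i ∈ Fs j := by
    intro i j hij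
    refine hFs_mono hij ?_
    rw [hFs_succ]
    exact Finset.mem_insert_self _ _
  have hsep : ∀ {i j : ℕ}, i < j → x j ∉ (x i * ·) '' Q := by
    intro i j hij hx
    exact hstepQ (Fs j) (Set.mem_iUnion₂.2 ⟨x i, hmem hij, hx⟩)
  have hxL : ∀ n, x n ∈ L := fun n => hstepL (Fs n)
  have hxQself : ∀ i, x i ∈ (x i * ·) '' Q := fun i => ⟨1, h1Q, mul_one _⟩
  have hne : ∀ {i j : ℕ}, i < j → x j ≠ x i := fun {i j} hij he =>
    hsep hij (he ▸ hxQself i)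
  have hinj : Function.Injective x := by
    intro i j hij
    rcases lt_trichotomy i j with hlt | heq | hgt
    · exact absurd hij.symm (hne hlt)
    · exact heq
    · exact absurd hij (hne hgt)
  refine ⟨x, hxL, hinj, ?_⟩
  intro M hMx hMinf hMc
  have hU1 : (1 : G) ∈ interior K := mem_interior_iff_mem_nhds.2 hKn
  have hcover : closure M ⊆ ⋃ g ∈ closure M, (g * ·) '' interior K :=
    fun g hg => Set.mem_iUnion₂.2 ⟨g, hg, 1, hU1, mul_one g⟩
  obtain ⟨t, hts, htfin, htcov⟩ := hMc.elim_finite_subcover_image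
    (fun g _ => isOpenMap_mul_left g _ isOpen_interior) hcover
  have hsub : ∀ g : G, ((g * ·) '' interior K ∩ Set.range x).Subsingleton := by
    intro g a ha b hb
    obtain ⟨⟨u, hu, hau⟩, i, hia⟩ := ha
    obtain ⟨⟨v, hv, hbv⟩, j, hjb⟩ := hb
    have key2 : ∀ {p q : ℕ} {u v : G}, u ∈ interior K → v ∈ interior K → p < q →
        g * u = x p → g * v = x q → False := by
      intro p q u v hu hv hpq hpu hqv
      refine hsep hpq ⟨u⁻¹ * v,
        Set.mul_mem_mul (Set.inv_mem_inv.2 (interior_subset hu)) (interior_subset hv), ?_⟩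
      simp only []
      rw [← hpu, ← hqv]
      group
    rcases lt_trichotomy i j with hlt | heq | hgt
    · exact (key2 hu hv hlt (hau.trans hia.symm) (hbv.trans hjb.symm)).elim
    · rw [← hia, ← hjb, heq]
    · exact (key2 hv hu hgt (hbv.trans hjb.symm) (hau.trans hia.symm)).elim
  have hfin : M.Finite := by
    have hMsub : M ⊆ ⋃ g ∈ t, ((g * ·) '' interior K ∩ Set.range x) := by
      intro m hm
      obtain ⟨g, hgt, hmg⟩ := Set.mem_iUnion₂.1 (htcov (subset_closure hm))
      exact Set.mem_iUnion₂.2 ⟨g, hgt, hmg, hMx hm⟩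
    exact (Set.Finite.biUnion htfin fun g _ => (hsub g).finite).subset hMsub
  exact hMinf hfin

/-- In a locally compact group, the union of finitely many right translation-compact sets is
right translation-compact. -/
theorem finite_union_right_translation_compact {G : Type*} [Group G] [TopologicalSpace G]
    [IsTopologicalGroup G] [LocallyCompactSpace G] [T2Space G]
    (S : Finset (Set G)) (h : ∀ T ∈ S, RightTranslationCompact T) :
    RightTranslationCompact (⋃ T ∈ S, T) := by
  classical
  intro L hL
  rcases S.eq_empty_or_nonempty with rfl | hSne
  · have hLne : L.Nonempty := by
      rcases Set.eq_empty_or_nonempty L with rfl | hne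
      · exact absurd (by simp [closure_empty] : IsCompact (closure (∅ : Set G))) hL
      · exact hne
    obtain ⟨b, hb⟩ := hLne
    refine ⟨{b}, Set.singleton_subset_iff.2 hb, Set.finite_singleton b, ?_⟩
    simp
  by_contra hcon
  push_neg at hcon
  obtain ⟨x, hxL, hxinj, hxinf⟩ := exists_escaping_seq hL
  set ι := {T : Set G // T ∈ S} with hι
  haveI : Nonempty ι := ⟨⟨hSne.choose, hSne.choose_spec⟩⟩
  -- step 1: for every n, a good coloring of the first n indices exists
  have hg_ex : ∀ n : ℕ, ∃ g : ℕ → ι,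
      ¬ IsCompact (closure (⋂ i ∈ Set.Iio n, (x i * ·) ⁻¹' ((g i : Set G)))) := by
    intro n
    have hF : ¬ IsCompact (closure (⋂ i ∈ Set.Iio n, (x i * ·) ⁻¹' (⋃ T ∈ S, T))) := by
      have hc := hcon (x '' Set.Iio n) (by rintro _ ⟨i, _, rfl⟩; exact hxL i)
        ((Set.finite_Iio n).image x)
      rwa [Set.biInter_image] at hc
    by_contra hno
    push_neg at hno
    refine hF ?_
    have hdecomp : (⋂ i ∈ Set.Iio n, (x i * ·) ⁻¹' (⋃ T ∈ S, T)) ⊆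
        ⋃ g : Fin n → ι, ⋂ i ∈ Set.Iio n,
          (x i * ·) ⁻¹' (((fun k => if hk : k < n then g ⟨k, hk⟩ else
            Classical.arbitrary ι) i : Set G)) := by
      intro y hy
      have hy' : ∀ i : Fin n, ∃ T : ι, x i * y ∈ (T : Set G) := by
        intro i
        have hmi := Set.mem_iInter₂.1 hy i i.isLt
        obtain ⟨T, hTS, hT⟩ := Set.mem_iUnion₂.1 hmi
        exact ⟨⟨T, hTS⟩, hT⟩
      choose c hc using hy'
      refine Set.mem_iUnion.2 ⟨c, Set.mem_iInter₂.2 fun i hi => ?_⟩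
      have hi' : i < n := hi
      simp only [dif_pos hi']
      exact hc ⟨i, hi'⟩
    refine relcpt_mono hdecomp ?_
    refine (isCompact_iUnion fun g => hno _).of_isClosed_subset isClosed_closure
      (closure_minimal (Set.iUnion_mono fun g => subset_closure)
        (isClosed_iUnion_of_finite fun g => isClosed_closure))
  choose gseq hgseq using hg_ex
  let 𝒰 : Ultrafilter ℕ := Filter.hyperfilter ℕ
  have hcolor : ∀ i : ℕ, ∃ c : ι, {n | gseq n i = c} ∈ 𝒰 := fun i =>
    ultra_color 𝒰 fun n => gseq n i
  choose f hf using hcolor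
  -- step 2: f is good at every level
  have hGoodf : ∀ m : ℕ,
      ¬ IsCompact (closure (⋂ i ∈ Set.Iio m, (x i * ·) ⁻¹' ((f i : Set G)))) := by
    intro m hc
    have h1 : (⋂ i ∈ Set.Iio m, {n | gseq n i = f i}) ∈ 𝒰 :=
      (Filter.biInter_mem (Set.finite_Iio m)).2 fun i _ => hf i
    have h2 : {n : ℕ | m ≤ n} ∈ 𝒰 := by
      refine Filter.hyperfilter_le_cofinite ?_
      rw [Filter.mem_cofinite]
      refine (Set.finite_Iio m).subset ?_
      intro k hk
      simp only [Set.mem_compl_iff, Set.mem_setOf_eq, not_le] at hk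
      exact hk
    obtain ⟨n, hn⟩ := Ultrafilter.nonempty_of_mem (Filter.inter_mem h1 h2)
    have hagree : ∀ i ∈ Set.Iio m, gseq n i = f i := fun i hi =>
      Set.mem_iInter₂.1 hn.1 i hi
    have hmn : m ≤ n := hn.2
    refine hgseq n (relcpt_mono ?_ hc)
    intro y hy
    refine Set.mem_iInter₂.2 fun i hi => ?_
    have hmi := Set.mem_iInter₂.1 hy i (lt_of_lt_of_le hi hmn)
    rwa [hagree i hi] at hmi
  -- step 3: pick an infinite color class and contradict rtc of that color
  obtain ⟨c, hcinf⟩ := Finite.exists_infinite_fiber f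
  have hA : ¬ IsCompact (closure (x '' (f ⁻¹' {c}))) := by
    refine hxinf _ (Set.image_subset_range x _) ?_
    exact (Set.infinite_coe_iff.1 hcinf).image hxinj.injOn
  obtain ⟨F₁, hF₁A, hF₁fin, hF₁c⟩ := h c.1 c.2 _ hA
  have hidx : ∀ b, b ∈ F₁ → ∃ i : ℕ, f i = c ∧ x i = b := by
    intro b hb
    obtain ⟨i, hi, rfl⟩ := hF₁A hb
    exact ⟨i, hi, rfl⟩
  choose idx hidx1 hidx2 using hidx
  haveI : Finite ↥F₁ := hF₁fin.to_subtype
  obtain ⟨m0, hm0⟩ := (Set.finite_range fun p : F₁ => idx p.1 p.2).bddAbove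
  refine hGoodf (m0 + 1) (relcpt_mono ?_ hF₁c)
  intro y hy
  refine Set.mem_iInter₂.2 fun b hb => ?_
  have hbnd : idx b hb ∈ Set.Iio (m0 + 1) := by
    have : idx b hb ≤ m0 := hm0 ⟨⟨b, hb⟩, rfl⟩
    exact Set.mem_Iio.2 (Nat.lt_succ_of_le this)
  have h1 := Set.mem_iInter₂.1 hy (idx b hb) hbnd
  rw [hidx1 b hb] at h1
  rwa [hidx2 b hb] at h1
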